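/- Let e be an integer with e ∉ {−1, 0, 1}, and let α ∈ Sₙ be a permutation without fixed points (g₁ = 0, i.e. α.support is all of Fin n), with order w = orderOf α. Assume that for every choice of integers r ≥ 2 and d ≥ 2 satisfying gcd(e − 1, r) = 1, r ∣ eʷ − 1 (as integers), d ∣ w, and d·r ∈ F_d(α), one has g_d = 0 (α has no cycle of length d) and gcd(e^d − 1, r) = 1. If y ∈ Sₙ is a solution of the power conjugate equation (e*α) such that gcd(e − 1, s) = 1 for every cycle length s ≥ 2 of y, then y = 1. -/

import Mathlib

/-- `cycleCount α j` is the number of cycles of length `j` of `α ∈ Sₙ`, counting each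
fixed point as a cycle of length `1`. -/
def cycleCount {n : ℕ} (α : Equiv.Perm (Fin n)) (j : ℕ) : ℕ :=
  if j = 1 then n - α.support.card else α.cycleType.count j

/-- The `d`-range `F_d(α)`: all sums `∑_j q_j · j` with `0 ≤ q_j ≤ g_j` and `q_j = 0`
whenever `d ∤ j`, where `g_j = cycleCount α j`. -/
def dRange {n : ℕ} (α : Equiv.Perm (Fin n)) (d : ℕ) : Set ℕ :=
  { m | ∃ q : ℕ → ℕ, (∀ j, q j ≤ cycleCount α j) ∧ (∀ j, ¬ d ∣ j → q j = 0) ∧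
      m = ∑ j ∈ Finset.range (n + 1), q j * j }

lemma perm_pow_apply_eq_iff_period_dvd {β : Type*} [Fintype β] [DecidableEq β]
    {f : Equiv.Perm β} {x : β} {k : ℕ} :
    (f ^ k) x = x ↔ MulAction.period f x ∣ k :=
  MulAction.pow_smul_eq_iff_period_dvd (m := f) (a := x)

lemma perm_zpow_apply_eq_iff_period_dvd {β : Type*} [Fintype β] [DecidableEq β]
    {f : Equiv.Perm β} {x : β} {k : ℤ} :
    (f ^ k) x = x ↔ (MulAction.period f x : ℤ) ∣ k :=
  MulAction.zpow_smul_eq_iff_period_dvd (g := f) (a := x)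

lemma perm_period_eq_one_iff {β : Type*} [Fintype β] [DecidableEq β]
    {f : Equiv.Perm β} {x : β} :
    MulAction.period f x = 1 ↔ f x = x :=
  MulAction.period_eq_one_iff (m := f) (a := x)

lemma period_eq_card_support_cycleOf {β : Type*} [Fintype β] [DecidableEq β]
    (f : Equiv.Perm β) (x : β) (hx : f x ≠ x) :
    MulAction.period f x = (f.cycleOf x).support.card := by
  have hc : (f.cycleOf x).IsCycle := f.isCycle_cycleOf hx
  rw [← hc.orderOf]
  apply Nat.dvd_antisymm
  · rw [← perm_pow_apply_eq_iff_period_dvd]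
    rw [← Equiv.Perm.cycleOf_pow_apply_self, pow_orderOf_eq_one, Equiv.Perm.one_apply]
  · apply orderOf_dvd_of_pow_eq_one
    rw [hc.pow_eq_one_iff' (x := x) (by rw [Equiv.Perm.cycleOf_apply_self]; exact hx)]
    rw [Equiv.Perm.cycleOf_pow_apply_self]
    exact perm_pow_apply_eq_iff_period_dvd.mpr dvd_rfl

lemma period_mem_cycleType {β : Type*} [Fintype β] [DecidableEq β]
    (f : Equiv.Perm β) (x : β) (hx : f x ≠ x) :
    MulAction.period f x ∈ f.cycleType := by
  rw [period_eq_card_support_cycleOf f x hx, Equiv.Perm.cycleType_def]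
  apply Multiset.mem_map.mpr
  refine ⟨f.cycleOf x, ?_, rfl⟩
  rw [← Finset.mem_def, Equiv.Perm.cycleOf_mem_cycleFactorsFinset_iff]
  exact Equiv.Perm.mem_support.mpr hx

/-- Theorem 2.12: let `α ∈ Sₙ` have no fixed points and order `w`.
Assume for all `r ≥ 2`, `d ≥ 2` with `gcd(e - 1, r) = 1`, `r ∣ e ^ w - 1`, `d ∣ w` and
`d·r ∈ F_d(α)` that `α` has no cycle of length `d` and `gcd(e ^ d - 1, r) = 1`. If `y`
solves `(e*α)` and `gcd(e - 1, s) = 1` for every cycle length `s` of `y`, then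
`y = 1`. -/
theorem stmt_13 (n : ℕ) (e : ℤ) (he : e ∉ ({-1, 0, 1} : Set ℤ))
    (α : Equiv.Perm (Fin n)) (hfix : α.support = Finset.univ)
    (w : ℕ) (hw : w = orderOf α)
    (hyp : ∀ r d : ℕ, 2 ≤ r → 2 ≤ d →
      Int.gcd (e - 1) (r : ℤ) = 1 → ((r : ℤ) ∣ e ^ w - 1) → d ∣ w →
      d * r ∈ dRange α d →
      cycleCount α d = 0 ∧ Int.gcd (e ^ d - 1) (r : ℤ) = 1)
    (y : Equiv.Perm (Fin n)) (hy : α * y * α⁻¹ = y ^ e)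
    (hcyc : ∀ s ∈ y.cycleType, Int.gcd (e - 1) (s : ℤ) = 1) :
    y = 1 := by
  classical
  by_contra hne
  obtain ⟨x₀, hx₀⟩ : ∃ x, y x ≠ x := by
    by_contra h
    push_neg at h
    exact hne (Equiv.ext h)
  set T := orderOf y with hT
  have hw0 : 0 < w := hw ▸ orderOf_pos α
  have hαw : α ^ w = 1 := by rw [hw]; exact pow_orderOf_eq_one α
  -- basic conjugation identities
  have hconj1 : ∀ k : ℤ, α * y ^ k * α⁻¹ = y ^ (e * k) := by
    intro k
    rw [zpow_mul, ← hy, conj_zpow]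
  have hstep : ∀ (k : ℤ) x, α ((y ^ k) x) = (y ^ (e * k)) (α x) := by
    intro k x
    have h : (α * y ^ k * α⁻¹) (α x) = (y ^ (e * k)) (α x) := by rw [hconj1]
    simpa [Equiv.Perm.mul_apply] using h
  have hconjm : ∀ m : ℕ, α ^ m * y * (α ^ m)⁻¹ = y ^ ((e : ℤ) ^ m) := by
    intro m
    induction m with
    | zero => simp
    | succ m ih =>
      have h1 : α ^ (m + 1) = α * α ^ m := by rw [pow_succ']
      rw [h1, mul_inv_rev, show α * α ^ m * y * ((α ^ m)⁻¹ * α⁻¹)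
            = α * (α ^ m * y * (α ^ m)⁻¹) * α⁻¹ by group, ih,
          show (e : ℤ) ^ (m + 1) = e * e ^ m by ring, ← hconj1 (e ^ m)]
  -- the order of y divides e ^ w - 1
  have hyew : y ^ ((e : ℤ) ^ w) = y := by
    have h := hconjm w
    rw [hαw] at h
    simpa using h.symm
  have hTdvd : (T : ℤ) ∣ e ^ w - 1 := by
    rw [orderOf_dvd_iff_zpow_eq_one, zpow_sub, hyew, zpow_one, mul_inv_cancel]
  -- e is coprime to T
  have hcopew : IsCoprime e ((e : ℤ) ^ w - 1) := by
    refine ⟨e ^ (w - 1), -1, ?_⟩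
    have : e ^ (w - 1) * e = e ^ w := by
      rw [← pow_succ, Nat.sub_add_cancel hw0]
    rw [this]; ring
  have hcop : IsCoprime e (T : ℤ) := hcopew.of_isCoprime_of_dvd_right hTdvd
  obtain ⟨u, v, huv⟩ := hcop
  have hyT : y ^ (T : ℤ) = 1 := by
    rw [zpow_natCast, hT, pow_orderOf_eq_one]
  have hyeu : y ^ (e * u) = y := by
    have h1 : e * u = 1 - v * T := by linarith
    rw [h1, zpow_sub, zpow_one, show v * (T : ℤ) = (T : ℤ) * v by ring, zpow_mul, hyT]
    simp
  have hy' : α⁻¹ * y * α = y ^ (u : ℤ) := by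
    have h0 : α⁻¹ * y ^ (e : ℤ) * α = y := by rw [← hy]; group
    calc α⁻¹ * y * α = α⁻¹ * y ^ (e * u) * α := by rw [hyeu]
      _ = α⁻¹ * (y ^ (e : ℤ)) ^ u * α := by rw [← zpow_mul]
      _ = (α⁻¹ * y ^ (e : ℤ) * (α⁻¹)⁻¹) ^ u := by rw [conj_zpow, inv_inv]
      _ = y ^ (u : ℤ) := by rw [inv_inv, h0]
  have hconj1' : ∀ k : ℤ, α⁻¹ * y ^ k * α = y ^ (u * k) := by
    intro k
    calc α⁻¹ * y ^ k * α = (α⁻¹ * y * (α⁻¹)⁻¹) ^ k := by rw [conj_zpow, inv_inv]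
      _ = (y ^ (u : ℤ)) ^ k := by rw [inv_inv, hy']
      _ = y ^ (u * k) := by rw [← zpow_mul]
  have hstep' : ∀ (k : ℤ) x, α⁻¹ ((y ^ k) x) = (y ^ (u * k)) (α⁻¹ x) := by
    intro k x
    have h : (α⁻¹ * y ^ k * α) (α⁻¹ x) = (y ^ (u * k)) (α⁻¹ x) := by rw [hconj1']
    simpa [Equiv.Perm.mul_apply] using h
  -- periods under y
  set p : Fin n → ℕ := fun x => MulAction.period y x with hp
  have hp_fix : ∀ (x : Fin n) (k : ℤ), (y ^ k) x = x ↔ (p x : ℤ) ∣ k := by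
    intro x k; exact perm_zpow_apply_eq_iff_period_dvd
  have hpy_dvd : ∀ x, p x ∣ T := fun x => MulAction.period_dvd_orderOf y x
  have hself : ∀ x : Fin n, (y ^ (p x : ℤ)) x = x := fun x => (hp_fix x _).mpr dvd_rfl
  have hcopu : IsCoprime u (T : ℤ) := ⟨e, v, by linarith⟩
  -- the period is invariant under α
  have hkey : ∀ (c : ℤ), IsCoprime c (T : ℤ) →
      ∀ (g : Equiv.Perm (Fin n)), (∀ (k : ℤ) x, g ((y ^ k) x) = (y ^ (c * k)) (g x)) →
      ∀ x, p (g x) ∣ p x := by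
    intro c hc g hg x
    have h1 : (y ^ (c * (p x : ℤ))) (g x) = g x := by
      rw [← hg, hself]
    have h2 : (p (g x) : ℤ) ∣ c * (p x : ℤ) := (hp_fix _ _).mp h1
    have h3 : IsCoprime c ((p (g x)) : ℤ) :=
      hc.of_isCoprime_of_dvd_right (Int.natCast_dvd_natCast.mpr (hpy_dvd (g x)))
    have h4 : ((p (g x)) : ℤ) ∣ (p x : ℤ) := (h3.symm).dvd_of_dvd_mul_left h2
    exact_mod_cast h4
  have hcope : IsCoprime e (T : ℤ) := ⟨u, v, huv⟩
  have hpα : ∀ x, p (α x) = p x := by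
    intro x
    apply Nat.dvd_antisymm
    · exact hkey e hcope α hstep x
    · have h := hkey u hcopu α⁻¹ hstep' (α x)
      simpa using h
  have hpαm : ∀ (m : ℕ) x, p ((α ^ m) x) = p x := by
    intro m
    induction m with
    | zero => simp
    | succ m ih =>
      intro x
      have h1 : (α ^ (m + 1)) x = (α ^ m) (α x) := by
        rw [pow_succ, Equiv.Perm.mul_apply]
      rw [h1, ih, hpα]
  -- SameCycle invariance
  have hSCf : ∀ x z, y.SameCycle x z → y.SameCycle (α x) (α z) := by
    rintro x z ⟨k, hk⟩
    exact ⟨e * k, by rw [← hstep, hk]⟩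
  have hSCb : ∀ x z, y.SameCycle x z → y.SameCycle (α⁻¹ x) (α⁻¹ z) := by
    rintro x z ⟨k, hk⟩
    exact ⟨u * k, by rw [← hstep', hk]⟩
  have hSC : ∀ x z, y.SameCycle (α x) (α z) ↔ y.SameCycle x z := by
    intro x z
    refine ⟨fun h => ?_, hSCf x z⟩
    have := hSCb _ _ h
    simpa using this
  have hSCm : ∀ (m : ℕ) x z, y.SameCycle ((α ^ m) x) ((α ^ m) z) ↔ y.SameCycle x z := by
    intro m
    induction m with
    | zero => simp
    | succ m ih =>
      intro x z
      have h1 : ∀ t, (α ^ (m + 1)) t = (α ^ m) (α t) := by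
        intro t; rw [pow_succ, Equiv.Perm.mul_apply]
      rw [h1, h1, ih, hSC]
  -- the return-time set R
  set R : ℕ → Prop := fun m => y.SameCycle x₀ ((α ^ m) x₀) with hR
  have hR0 : R 0 := by simp [hR, Equiv.Perm.SameCycle.refl]
  have hRc : ∀ a b : ℕ, (α ^ b) ((α ^ a) x₀) = (α ^ (a + b)) x₀ := by
    intro a b
    rw [← Equiv.Perm.mul_apply, ← pow_add, add_comm]
  have Rsub : ∀ a b, R (a + b) → R b → R a := by
    intro a b hab hb
    have h1 : y.SameCycle ((α ^ b) x₀) ((α ^ b) ((α ^ a) x₀)) := by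
      rw [hRc]
      exact hb.symm.trans hab
    exact (hSCm b _ _).mp h1
  have Radd : ∀ a b, R a → R b → R (a + b) := by
    intro a b ha hb
    have h1 : y.SameCycle ((α ^ b) x₀) ((α ^ b) ((α ^ a) x₀)) := (hSCm b _ _).mpr ha
    rw [hRc] at h1
    exact hb.trans h1
  have hRw : R w := by
    show y.SameCycle x₀ ((α ^ w) x₀)
    rw [hαw]
    exact Equiv.Perm.SameCycle.refl _ _
  have hex : ∃ m, 0 < m ∧ R m := ⟨w, hw0, hRw⟩
  set d := Nat.find hex with hdd
  obtain ⟨hd0, hdR⟩ : 0 < d ∧ R d := Nat.find_spec hex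
  have hdle : ∀ m, 0 < m → R m → d ≤ m := fun m h1 h2 => Nat.find_le ⟨h1, h2⟩
  have hddvd : ∀ m, R m → d ∣ m := by
    intro m hm
    have hq : ∀ q : ℕ, R (d * q) := by
      intro q
      induction q with
      | zero => simpa using hR0
      | succ q ih =>
        have := Radd (d * q) d ih hdR
        rwa [show d * q + d = d * (q + 1) by ring] at this
    have hmod : R (m % d) := by
      apply Rsub (m % d) (d * (m / d)) _ (hq (m / d))
      rwa [Nat.mod_add_div]
    rcases Nat.eq_zero_or_pos (m % d) with h | h
    · exact Nat.dvd_of_mod_eq_zero h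
    · exact absurd (hdle _ h hmod) (not_le.mpr (Nat.mod_lt _ hd0))
  have hdw : d ∣ w := hddvd w hRw
  -- r and its properties
  set r := p x₀ with hr
  have hr2 : 2 ≤ r := by
    have h0 : 0 < r := MulAction.period_pos_of_orderOf_pos (orderOf_pos y) x₀
    have h1 : r ≠ 1 := fun h => hx₀ (perm_period_eq_one_iff.mp h)
    omega
  have hrmem : r ∈ y.cycleType := period_mem_cycleType y x₀ hx₀
  have hgcd1 : Int.gcd (e - 1) (r : ℤ) = 1 := hcyc r hrmem
  have hre : (r : ℤ) ∣ e ^ w - 1 :=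
    dvd_trans (Int.natCast_dvd_natCast.mpr (hpy_dvd x₀)) hTdvd
  -- the union U of the α-orbit of the cycle of x₀
  set U : Finset (Fin n) :=
    Finset.univ.filter (fun x => ∃ i < d, y.SameCycle ((α ^ i) x₀) x) with hU
  have hUmem : ∀ x, x ∈ U ↔ ∃ i < d, y.SameCycle ((α ^ i) x₀) x := by
    intro x; simp [hU]
  have hUf : ∀ z ∈ U, α z ∈ U := by
    intro z hz
    obtain ⟨i, hi, hsc⟩ := (hUmem z).mp hz
    have h1 : y.SameCycle ((α ^ (i + 1)) x₀) (α z) := by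
      have := hSCf _ _ hsc
      rwa [show α ((α ^ i) x₀) = (α ^ (i + 1)) x₀ by
        rw [pow_succ', Equiv.Perm.mul_apply]] at this
    rcases Nat.lt_or_ge (i + 1) d with h | h
    · exact (hUmem _).mpr ⟨i + 1, h, h1⟩
    · have hid : i + 1 = d := le_antisymm (by omega) h
      rw [hid] at h1
      exact (hUmem _).mpr ⟨0, hd0, by simpa using hdR.trans h1⟩
  have hUb : ∀ z ∈ U, α⁻¹ z ∈ U := by
    intro z hz
    obtain ⟨i, hi, hsc⟩ := (hUmem z).mp hz
    rcases Nat.eq_zero_or_pos i with h0 | h0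
    · subst h0
      have h1 : y.SameCycle ((α ^ d) x₀) z := by
        refine hdR.symm.trans ?_
        simpa using hsc
      have h2 : y.SameCycle ((α ^ (d - 1)) x₀) (α⁻¹ z) := by
        apply (hSC _ _).mp
        rwa [show α ((α ^ (d - 1)) x₀) = (α ^ d) x₀ by
          rw [← Equiv.Perm.mul_apply, ← pow_succ', Nat.sub_add_cancel hd0],
          (show α (α⁻¹ z) = z from α.apply_symm_apply z)]
      exact (hUmem _).mpr ⟨d - 1, by omega, h2⟩
    · have h2 : y.SameCycle ((α ^ (i - 1)) x₀) (α⁻¹ z) := by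
        apply (hSC _ _).mp
        rwa [show α ((α ^ (i - 1)) x₀) = (α ^ i) x₀ by
          rw [← Equiv.Perm.mul_apply, ← pow_succ', Nat.sub_add_cancel h0],
          (show α (α⁻¹ z) = z from α.apply_symm_apply z)]
      exact (hUmem _).mpr ⟨i - 1, by omega, h2⟩
  have hUzpow : ∀ (i : ℤ) z, z ∈ U → (α ^ i) z ∈ U := by
    intro i
    induction i using Int.induction_on with
    | zero => simpa using fun z hz => hz
    | succ j ih =>
      intro z hz
      have h1 : (α ^ ((j : ℤ) + 1)) z = α ((α ^ (j : ℤ)) z) := by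
        rw [show α ^ ((j : ℤ) + 1) = α * α ^ (j : ℤ) by group, Equiv.Perm.mul_apply]
      rw [h1]
      exact hUf _ (ih z hz)
    | pred j ih =>
      intro z hz
      have h1 : (α ^ (-(j : ℤ) - 1)) z = α⁻¹ ((α ^ (-(j : ℤ))) z) := by
        rw [show α ^ (-(j : ℤ) - 1) = α⁻¹ * α ^ (-(j : ℤ)) by group, Equiv.Perm.mul_apply]
      rw [h1]
      exact hUb _ (ih z hz)
  -- every point of U has α-period divisible by d
  have hUdvd : ∀ x ∈ U, d ∣ MulAction.period α x := by
    intro x hx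
    obtain ⟨i, hi, hsc⟩ := (hUmem x).mp hx
    set l := MulAction.period α x with hl
    have hαl : (α ^ l) x = x := perm_pow_apply_eq_iff_period_dvd.mpr dvd_rfl
    have h1 : y.SameCycle ((α ^ l) ((α ^ i) x₀)) x := by
      have := (hSCm l _ _).mpr hsc
      rwa [hαl] at this
    have h2 : y.SameCycle ((α ^ i) ((α ^ l) x₀)) ((α ^ i) x₀) := by
      rw [hRc l i, add_comm l i]
      rw [hRc i l] at h1
      exact h1.trans hsc.symm
    exact hddvd l ((hSCm i _ _).mp h2).symm
  -- every point of the form α^i x₀ is moved by y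
  have hsupp : ∀ i : ℕ, y ((α ^ i) x₀) ≠ (α ^ i) x₀ := by
    intro i h
    have : p ((α ^ i) x₀) = 1 := perm_period_eq_one_iff.mpr h
    rw [hpαm] at this
    omega
  have hcardS : ∀ i : ℕ, (y.cycleOf ((α ^ i) x₀)).support.card = r := by
    intro i
    rw [← period_eq_card_support_cycleOf y _ (hsupp i)]
    exact hpαm i x₀
  -- U is the disjoint union of the supports of the cycles at α^i x₀
  have hUeq : U = (Finset.range d).biUnion
      (fun i => (y.cycleOf ((α ^ i) x₀)).support) := by
    ext z
    simp only [hUmem, Finset.mem_biUnion, Finset.mem_range,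
      Equiv.Perm.mem_support_cycleOf_iff]
    constructor
    · rintro ⟨i, hi, hsc⟩
      exact ⟨i, hi, hsc, Equiv.Perm.mem_support.mpr (hsupp i)⟩
    · rintro ⟨i, hi, hsc, _⟩
      exact ⟨i, hi, hsc⟩
  have hdisj : ∀ i ∈ Finset.range d, ∀ j ∈ Finset.range d, i ≠ j →
      Disjoint (y.cycleOf ((α ^ i) x₀)).support (y.cycleOf ((α ^ j) x₀)).support := by
    have main : ∀ i j, i < j → j < d →
        Disjoint (y.cycleOf ((α ^ i) x₀)).support (y.cycleOf ((α ^ j) x₀)).support := by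
      intro i j hij hjd
      rw [Finset.disjoint_left]
      intro z hzi hzj
      rw [Equiv.Perm.mem_support_cycleOf_iff] at hzi hzj
      have h1 : y.SameCycle ((α ^ i) x₀) ((α ^ j) x₀) := hzi.1.trans hzj.1.symm
      have h2 : (α ^ j) x₀ = (α ^ i) ((α ^ (j - i)) x₀) := by
        rw [hRc, Nat.sub_add_cancel (le_of_lt hij)]
      rw [h2] at h1
      have h3 : R (j - i) := (hSCm i _ _).mp h1
      have h4 : d ∣ (j - i) := hddvd _ h3
      have h5 : 0 < j - i := by omega
      have := Nat.le_of_dvd h5 h4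
      omega
    intro i hi j hj hij
    rw [Finset.mem_range] at hi hj
    rcases lt_trichotomy i j with h | h | h
    · exact main i j h hj
    · exact absurd h hij
    · exact (main j i h hi).symm
  have hcardU : U.card = d * r := by
    rw [hUeq, Finset.card_biUnion hdisj]
    simp only [hcardS]
    rw [Finset.sum_const, Finset.card_range, smul_eq_mul]
  -- the collection of cycles of α contained in U, and the counting function q
  set C : Finset (Equiv.Perm (Fin n)) :=
    α.cycleFactorsFinset.filter (fun c => c.support ⊆ U) with hC
  set q : ℕ → ℕ := fun j => (C.filter (fun c => c.support.card = j)).card with hq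
  have hαne : ∀ x : Fin n, α x ≠ x := fun x =>
    Equiv.Perm.mem_support.mp (by rw [hfix]; exact Finset.mem_univ x)
  have hCfac : ∀ c ∈ C, c ∈ α.cycleFactorsFinset := fun c hc =>
    (Finset.mem_filter.mp hc).1
  have hCsub : ∀ c ∈ C, c.support ⊆ U := fun c hc => (Finset.mem_filter.mp hc).2
  have hq1 : q 1 = 0 := by
    rw [hq]
    apply Finset.card_eq_zero.mpr
    rw [Finset.filter_eq_empty_iff]
    intro c hc
    have h2 := ((Equiv.Perm.mem_cycleFactorsFinset_iff.mp (hCfac c hc)).1).two_le_card_support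
    omega
  have hqle : ∀ j, q j ≤ cycleCount α j := by
    intro j
    by_cases hj : j = 1
    · rw [hj, hq1]; exact Nat.zero_le _
    · rw [cycleCount, if_neg hj]
      calc q j ≤ (α.cycleFactorsFinset.filter (fun c => j = c.support.card)).card := by
            apply Finset.card_le_card
            intro c hc
            rw [Finset.mem_filter] at hc ⊢
            exact ⟨hCfac c hc.1, hc.2.symm⟩
        _ = Multiset.count j α.cycleType := by
            rw [Equiv.Perm.cycleType_def, Multiset.count_map]
            rfl
  have hqd : ∀ j, ¬ d ∣ j → q j = 0 := by
    intro j hj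
    rw [hq]
    apply Finset.card_eq_zero.mpr
    rw [Finset.filter_eq_empty_iff]
    intro c hc hcard
    apply hj
    have hcfac := hCfac c hc
    have hcyc' := (Equiv.Perm.mem_cycleFactorsFinset_iff.mp hcfac).1
    obtain ⟨x, hxs⟩ : ∃ x, x ∈ c.support := by
      have := hcyc'.two_le_card_support
      exact Finset.card_pos.mp (by omega)
    have hcx : c = α.cycleOf x := Equiv.Perm.cycle_is_cycleOf hxs hcfac
    have hPx : MulAction.period α x = c.support.card := by
      rw [hcx]; exact period_eq_card_support_cycleOf α x (hαne x)
    have hdvdP := hUdvd x (hCsub c hc hxs)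
    rw [hPx, hcard] at hdvdP
    exact hdvdP
  have hmaps : ∀ c ∈ C, c.support.card ∈ Finset.range (n + 1) := by
    intro c _
    rw [Finset.mem_range]
    have h1 : c.support.card ≤ n := by
      have := Finset.card_le_univ c.support
      simpa using this
    omega
  have hsum1 : ∑ j ∈ Finset.range (n + 1), q j * j = ∑ c ∈ C, c.support.card := by
    rw [← Finset.sum_fiberwise_of_maps_to hmaps (fun c => c.support.card)]
    apply Finset.sum_congr rfl
    intro j _
    have h1 : ∑ c ∈ C.filter (fun c => c.support.card = j), c.support.card
        = ∑ _c ∈ C.filter (fun c => c.support.card = j), j :=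
      Finset.sum_congr rfl (fun c hc => (Finset.mem_filter.mp hc).2)
    rw [h1, Finset.sum_const, smul_eq_mul, hq]
  have hUC : U = C.biUnion (fun c => c.support) := by
    apply Finset.ext
    intro z
    simp only [Finset.mem_biUnion]
    constructor
    · intro hz
      refine ⟨α.cycleOf z, ?_, ?_⟩
      · rw [hC, Finset.mem_filter]
        constructor
        · exact Equiv.Perm.cycleOf_mem_cycleFactorsFinset_iff.mpr
            (Equiv.Perm.mem_support.mpr (hαne z))
        · intro t ht
          rw [Equiv.Perm.mem_support_cycleOf_iff] at ht
          obtain ⟨⟨i, hi⟩, _⟩ := ht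
          rw [← hi]
          exact hUzpow i z hz
      · exact Equiv.Perm.mem_support_cycleOf_iff.mpr
          ⟨Equiv.Perm.SameCycle.refl _ _, Equiv.Perm.mem_support.mpr (hαne z)⟩
    · rintro ⟨c, hc, hzc⟩
      exact hCsub c hc hzc
  have hsum2 : ∑ c ∈ C, c.support.card = U.card := by
    rw [hUC]
    rw [Finset.card_biUnion]
    intro c hc c' hc' hne'
    have hpd := Equiv.Perm.cycleFactorsFinset_pairwise_disjoint α
      (hCfac c hc) (hCfac c' hc') hne'
    exact Equiv.Perm.Disjoint.disjoint_support hpd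
  -- construction of a fixed point of α ^ d inside U
  have hstepm : ∀ (m : ℕ) (k : ℤ) (x : Fin n),
      (α ^ m) ((y ^ k) x) = (y ^ ((e : ℤ) ^ m * k)) ((α ^ m) x) := by
    intro m
    induction m with
    | zero => intro k x; simp
    | succ m ih =>
      intro k x
      have h1 : ∀ t : Fin n, (α ^ (m + 1)) t = α ((α ^ m) t) := fun t => by
        rw [pow_succ', Equiv.Perm.mul_apply]
      calc (α ^ (m + 1)) ((y ^ k) x) = α ((α ^ m) ((y ^ k) x)) := h1 _
        _ = α ((y ^ ((e : ℤ) ^ m * k)) ((α ^ m) x)) := by rw [ih]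
        _ = (y ^ (e * ((e : ℤ) ^ m * k))) (α ((α ^ m) x)) := hstep _ _
        _ = (y ^ ((e : ℤ) ^ (m + 1) * k)) ((α ^ (m + 1)) x) := by
            rw [show (e : ℤ) * ((e : ℤ) ^ m * k) = (e : ℤ) ^ (m + 1) * k by ring, h1]
  have hcommon : Int.gcd (e ^ d - 1) (r : ℤ) = 1 →
      ∃ x', (α ^ d) x' = x' ∧ x' ∈ U := by
    intro hgcdd
    obtain ⟨u', v', huv'⟩ := Int.isCoprime_iff_gcd_eq_one.mpr hgcdd
    obtain ⟨c, hc⟩ := hdR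
    refine ⟨(y ^ (-c * u')) x₀, ?_, ?_⟩
    · set k : ℤ := -c * u' with hk
      have hδ : (y ^ ((e : ℤ) ^ d * k + c - k)) x₀ = x₀ := by
        apply (hp_fix x₀ _).mpr
        have h1 : 1 - u' * ((e : ℤ) ^ d - 1) = v' * r := by linarith
        have hval : (e : ℤ) ^ d * k + c - k = (c * v') * (r : ℤ) := by
          calc (e : ℤ) ^ d * k + c - k = c * (1 - u' * ((e : ℤ) ^ d - 1)) := by
                rw [hk]; ring
            _ = c * (v' * r) := by rw [h1]
            _ = (c * v') * r := by ring
        rw [hval]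
        exact dvd_mul_left _ _
      calc (α ^ d) ((y ^ k) x₀) = (y ^ ((e : ℤ) ^ d * k)) ((α ^ d) x₀) := hstepm d k x₀
        _ = (y ^ ((e : ℤ) ^ d * k)) ((y ^ c) x₀) := by rw [hc]
        _ = (y ^ ((e : ℤ) ^ d * k + c)) x₀ := by
            rw [← Equiv.Perm.mul_apply, ← zpow_add]
        _ = (y ^ (k + ((e : ℤ) ^ d * k + c - k))) x₀ := by
            conv_lhs => rw [show (e : ℤ) ^ d * k + c = k + ((e : ℤ) ^ d * k + c - k) by ring]
        _ = (y ^ k) ((y ^ ((e : ℤ) ^ d * k + c - k)) x₀) := by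
            rw [zpow_add, Equiv.Perm.mul_apply]
        _ = (y ^ k) x₀ := by rw [hδ]
    · refine (hUmem _).mpr ⟨0, hd0, ?_⟩
      have : y.SameCycle x₀ ((y ^ (-c * u')) x₀) := ⟨-c * u', rfl⟩
      simpa using this
  -- conclusion
  by_cases hd1 : d = 1
  · obtain ⟨x', hx'fix, _⟩ := hcommon (by rw [hd1, pow_one]; exact hgcd1)
    rw [hd1, pow_one] at hx'fix
    exact hαne x' hx'fix
  · have hd2 : 2 ≤ d := by omega
    have hdrange : d * r ∈ dRange α d :=
      ⟨q, hqle, hqd, ((hsum1.trans hsum2).trans hcardU).symm⟩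
    obtain ⟨hcount, hgcdd⟩ := hyp r d hr2 hd2 hgcd1 hre hdw hdrange
    obtain ⟨x', hx'fix, hx'U⟩ := hcommon hgcdd
    have hP1 : MulAction.period α x' ∣ d := perm_pow_apply_eq_iff_period_dvd.mp hx'fix
    have hP2 : d ∣ MulAction.period α x' := hUdvd x' hx'U
    have hPd : MulAction.period α x' = d := Nat.dvd_antisymm hP1 hP2
    have hmem : d ∈ α.cycleType := hPd ▸ period_mem_cycleType α x' (hαne x')
    have hne0 : cycleCount α d ≠ 0 := by
      rw [cycleCount, if_neg (by omega : ¬ d = 1)]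
      exact fun h => (Multiset.count_eq_zero.mp h) hmem
    exact hne0 hcount
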